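/- The Hermitian matrix A(K₁ + K⃗₃) with rows (0,1,1,1),(1,0,-i,i),(1,i,0,-i),(1,-i,i,0) achieves uniform mixing at time t = π/(3√3): every entry of exp(-iAt) has modulus 1/2. -/

import Mathlib

open Matrix Complex



noncomputable def Amat : Matrix (Fin 4) (Fin 4) ℂ :=
  !![0, 1, 1, 1; 1, 0, -I, I; 1, I, 0, -I; 1, -I, I, 0]

lemma Amat_sq : Amat * Amat = (3 : ℂ) • 1 := by
  ext i j
  fin_cases i <;> fin_cases j <;>
    simp [Amat, Matrix.mul_apply, Fin.sum_univ_four, Matrix.one_apply,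
      Matrix.vecHead, Matrix.vecTail] <;> norm_num

lemma s3 : ((Real.sqrt 3 : ℝ) : ℂ) * ((Real.sqrt 3 : ℝ) : ℂ) = 3 := by
  rw [← Complex.ofReal_mul, Real.mul_self_sqrt (by norm_num)]
  norm_num

lemma s3ne : ((Real.sqrt 3 : ℝ) : ℂ) ≠ 0 := by
  intro h
  apply_fun (· * ((Real.sqrt 3 : ℝ) : ℂ)) at h
  rw [s3, zero_mul] at h
  norm_num at h

noncomputable def Jmat : Matrix (Fin 4) (Fin 4) ℂ := (-(I / (Real.sqrt 3 : ℝ))) • Amat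

lemma Jmat_sq : Jmat * Jmat = -1 := by
  rw [Jmat, smul_mul_smul_comm, Amat_sq, smul_smul]
  have : (-(I / ((Real.sqrt 3 : ℝ) : ℂ)) * -(I / ((Real.sqrt 3 : ℝ) : ℂ)) * 3 : ℂ) = -1 := by
    rw [neg_mul_neg, div_mul_div_comm, Complex.I_mul_I, s3]
    norm_num
  rw [this, neg_smul, one_smul]

noncomputable def phi : ℂ →ₐ[ℝ] Matrix (Fin 4) (Fin 4) ℂ := Complex.liftAux Jmat Jmat_sq

lemma phi_cont : Continuous phi := phi.toLinearMap.continuous_of_finiteDimensional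

lemma X_eq : (-(Complex.I * ((Real.pi / (3 * Real.sqrt 3) : ℝ) : ℂ))) • Amat
    = phi ((Real.pi / 3 : ℝ) * Complex.I) := by
  rw [phi, Complex.liftAux_apply]
  simp only [Complex.mul_re, Complex.mul_im, Complex.ofReal_re, Complex.ofReal_im,
    Complex.I_re, Complex.I_im, mul_zero, mul_one, zero_mul, sub_zero, zero_sub, add_zero,
    zero_add, map_zero, neg_zero]
  rw [Jmat, ← algebraMap_smul ℂ (Real.pi / 3 : ℝ) ((-(I / ((Real.sqrt 3:ℝ):ℂ))) • Amat),
    smul_smul]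
  congr 1
  show -(I * _) = ((Real.pi / 3 : ℝ) : ℂ) * -(I / _)
  have h := s3ne
  push_cast
  field_simp

lemma key : NormedSpace.exp ((-(Complex.I * ((Real.pi / (3 * Real.sqrt 3) : ℝ) : ℂ))) • Amat)
    = ((1/2 : ℝ)) • (1 : Matrix (Fin 4) (Fin 4) ℂ) + ((Real.sqrt 3 / 2 : ℝ)) • Jmat := by
  letI : SeminormedRing (Matrix (Fin 4) (Fin 4) ℂ) := Matrix.linftyOpSemiNormedRing
  letI : NormedRing (Matrix (Fin 4) (Fin 4) ℂ) := Matrix.linftyOpNormedRing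
  letI : NormedAlgebra ℝ (Matrix (Fin 4) (Fin 4) ℂ) := Matrix.linftyOpNormedAlgebra
  rw [X_eq]
  refine (NormedSpace.map_exp phi phi_cont _).symm.trans ?_
  rw [← Complex.exp_eq_exp_ℂ]
  rw [Complex.exp_mul_I, ← Complex.ofReal_cos, ← Complex.ofReal_sin,
    Real.cos_pi_div_three, Real.sin_pi_div_three]
  rw [phi, Complex.liftAux_apply]
  simp only [Complex.add_re, Complex.ofReal_re, Complex.mul_re, Complex.I_re, Complex.I_im,
    Complex.ofReal_im, Complex.add_im, Complex.mul_im]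
  ring_nf
  rw [Algebra.algebraMap_eq_smul_one]

/-- the cone over the oriented triangle `K₁ + K⃗₃` has uniform mixing at
time `π/(3√3)`: every entry of `exp(-iAt)` has modulus `1/2`. -/
theorem stmt14 :
    ∀ a b : Fin 4,
      ‖(NormedSpace.exp
        ((-(Complex.I * ((Real.pi / (3 * Real.sqrt 3) : ℝ) : ℂ))) •
          !![0, 1, 1, 1; 1, 0, -I, I; 1, I, 0, -I; 1, -I, I, 0])) a b‖ = 1 / 2 := by
  intro a b
  have h := congrFun (congrFun key a) b
  rw [show (!![0, 1, 1, 1; 1, 0, -I, I; 1, I, 0, -I; 1, -I, I, 0] : Matrix (Fin 4) (Fin 4) ℂ)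
    = Amat from rfl]
  rw [show ((NormedSpace.exp ((-(Complex.I * ((Real.pi / (3 * Real.sqrt 3) : ℝ) : ℂ))) • Amat)) a b)
    = (((1/2 : ℝ)) • (1 : Matrix (Fin 4) (Fin 4) ℂ) + ((Real.sqrt 3 / 2 : ℝ)) • Jmat) a b from h]
  have hs : ((Real.sqrt 3 / 2 : ℝ) : ℂ) * -(I / ((Real.sqrt 3:ℝ):ℂ)) = -(I/2) := by
    have := s3ne
    push_cast
    field_simp
  fin_cases a <;> fin_cases b <;>
    simp [Jmat, Amat, Matrix.one_apply, smul_smul, hs, Matrix.vecHead, Matrix.vecTail] <;>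
    norm_num [Complex.norm_def, Complex.normSq_apply,
      _root_.abs_of_nonneg (Real.sqrt_nonneg 3), div_mul_eq_mul_div,
      mul_inv_cancel₀ ((Real.sqrt_pos.mpr (by norm_num : (0:ℝ)<3)).ne')]
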